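/- For integers N ≥ 1 and 0 ≤ m ≤ N-1, define e_1(N,N,m) = Σ_{ℓ=m}^{N-1} ((N-ℓ)/N) · C(N,ℓ) · C(ℓ,m) · (-1)^{ℓ-m}. Then e_1(N,N,m) = 1 if m = N-1 and e_1(N,N,m) = 0 if m < N-1. -/

import Mathlib

/-- e₁(N,N,m) = 1 if m = N-1 and 0 otherwise. -/
theorem stmt_1 (N : ℕ) (hN : 1 ≤ N) (m : ℕ) (hm : m ≤ N - 1) :
    (∑ ℓ ∈ Finset.Icc m (N - 1),
        (((N : ℝ) - ℓ) / N) * (N.choose ℓ) * (ℓ.choose m) * (-1 : ℝ) ^ (ℓ - m)) =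
      if m = N - 1 then 1 else 0 := by
  obtain ⟨n, rfl⟩ : ∃ n, N = n + 1 := ⟨N - 1, (Nat.succ_pred_eq_of_pos hN).symm⟩
  simp only [Nat.add_sub_cancel] at hm ⊢
  have key : ∀ ℓ ∈ Finset.Icc m n,
      (((n + 1 : ℕ) : ℝ) - ℓ) / ((n + 1 : ℕ) : ℝ) * ((n + 1).choose ℓ) * (ℓ.choose m) *
        (-1 : ℝ) ^ (ℓ - m)
      = (n.choose m : ℝ) * ((n - m).choose (ℓ - m)) * (-1 : ℝ) ^ (ℓ - m) := by
    intro ℓ hℓ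
    obtain ⟨hmℓ, hℓn⟩ := Finset.mem_Icc.mp hℓ
    have h1 : ((n.choose ℓ : ℝ)) * ((n : ℝ) + 1) = ((n + 1).choose ℓ) * (((n + 1 : ℕ) : ℝ) - ℓ) := by
      have := Nat.choose_mul_succ_eq n ℓ
      have hc : ((n.choose ℓ * (n + 1) : ℕ) : ℝ) = (((n + 1).choose ℓ * (n + 1 - ℓ) : ℕ) : ℝ) := by
        exact_mod_cast congrArg (Nat.cast : ℕ → ℝ) this
      push_cast [Nat.cast_sub (by omega : ℓ ≤ n + 1)] at hc
      push_cast
      linarith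
    have hne : ((n + 1 : ℕ) : ℝ) ≠ 0 := by positivity
    have h2 : (((n + 1 : ℕ) : ℝ) - ℓ) / ((n + 1 : ℕ) : ℝ) * ((n + 1).choose ℓ)
        = (n.choose ℓ : ℝ) := by
      field_simp
      push_cast at h1 ⊢
      linarith
    rw [h2]
    have h3 : (n.choose ℓ : ℝ) * (ℓ.choose m) = (n.choose m : ℝ) * ((n - m).choose (ℓ - m)) := by
      exact_mod_cast congrArg (Nat.cast : ℕ → ℝ) (Nat.choose_mul (n := n) hmℓ)
    rw [h3]
  rw [Finset.sum_congr rfl key]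
  have hmap : Finset.Icc m n = (Finset.range (n - m + 1)).map
      ⟨fun i => m + i, add_right_injective m⟩ := by
    ext x
    simp only [Finset.mem_Icc, Finset.mem_map, Finset.mem_range, Function.Embedding.coeFn_mk]
    constructor
    · rintro ⟨h1, h2⟩; exact ⟨x - m, by omega, by omega⟩
    · rintro ⟨i, hi, rfl⟩; omega
  rw [hmap, Finset.sum_map]
  simp only [Function.Embedding.coeFn_mk, Nat.add_sub_cancel_left]
  simp_rw [mul_assoc, ← Finset.mul_sum]
  have halt : (∑ i ∈ Finset.range (n - m + 1), ((n - m).choose i : ℝ) * (-1 : ℝ) ^ i)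
      = if n - m = 0 then 1 else 0 := by
    have := Int.alternating_sum_range_choose (n := n - m)
    have hc := congrArg (Int.cast : ℤ → ℝ) this
    push_cast at hc
    rw [← hc]
    apply Finset.sum_congr rfl
    intro i _
    ring
  rw [halt]
  by_cases h : m = n
  · subst h
    simp
  · have : n - m ≠ 0 := by omega
    simp [this, h]
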